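/- Let σ₀ ≥ 1 and σ* > 1 with σ* finite. Then (σ₀ - √(σ₀²-1))·(σ* + √(σ*²-1)) ≥ (σ₀/σ*) - √((σ₀/σ*)² - 1) whenever σ₀/σ* ≥ 1. -/

import Mathlib

theorem stmt18 (σ₀ σs : ℝ) (h0 : 1 ≤ σ₀) (hs : 1 < σs) (hq : 1 ≤ σ₀ / σs) :
    (σ₀ - Real.sqrt (σ₀^2 - 1)) * (σs + Real.sqrt (σs^2 - 1))
      ≥ σ₀ / σs - Real.sqrt ((σ₀ / σs)^2 - 1) := by
  set q := σ₀ / σs with hqdef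
  set a := Real.sqrt (σ₀^2 - 1) with hadef
  set b := Real.sqrt (σs^2 - 1) with hbdef
  set c := Real.sqrt (q^2 - 1) with hcdef
  have ha0 : 0 ≤ a := Real.sqrt_nonneg _
  have hb0 : 0 ≤ b := Real.sqrt_nonneg _
  have hc0 : 0 ≤ c := Real.sqrt_nonneg _
  have ha2 : a^2 = σ₀^2 - 1 := Real.sq_sqrt (by nlinarith)
  have hb2 : b^2 = σs^2 - 1 := Real.sq_sqrt (by nlinarith)
  have hc2 : c^2 = q^2 - 1 := Real.sq_sqrt (by nlinarith)
  have hσ : σ₀ = q * σs := by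
    rw [hqdef, div_mul_cancel₀ σ₀ (ne_of_gt (by linarith : (0:ℝ) < σs))]
  have hkey : a ≤ σs * c + q * b := by
    have hX : 0 ≤ σs * c + q * b := by positivity
    have h1 : σ₀^2 - 1 ≤ (σs * c + q * b)^2 := by
      nlinarith [mul_nonneg hb0 hc0, sq_nonneg (b*c), mul_nonneg (mul_nonneg hb0 hc0) (le_trans zero_le_one h0)]
    calc a ≤ Real.sqrt ((σs * c + q * b)^2) := Real.sqrt_le_sqrt h1
    _ = σs * c + q * b := Real.sqrt_sq hX
  have hainv : (σ₀ - a) * (σ₀ + a) = 1 := by nlinarith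
  have hcinv : (q - c) * (q + c) = 1 := by nlinarith
  have hpa : 0 < σ₀ + a := by linarith
  have hpc : 0 < q + c := by linarith
  have hmain : (σs + b) * (q + c) ≥ σ₀ + a := by nlinarith [mul_nonneg hb0 hc0]
  -- multiply goal by (σ₀+a)*(q+c) > 0
  nlinarith [mul_pos hpa hpc, mul_nonneg (mul_nonneg hpa.le hpc.le) (sub_nonneg.mpr hmain),
    mul_le_mul_of_nonneg_left hmain hpa.le]
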